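/- arXiv:2004.13269 — 2 statements merged into one kernel-verified Lean document; each statement's English description precedes it below -/
import Mathlib

section
/- Let |φ⟩ = Σ_{i=1}^{d1} Σ_{j=1}^{d2} Σ_{k=1}^{d3} a_{ijk}|ijk⟩ be a unit vector in ℂ^{d1}⊗ℂ^{d2}⊗ℂ^{d3}. Then C_3²(|φ⟩) = (1/2) Σ_{i,p=1}^{d1} Σ_{j,q=1}^{d2} Σ_{k,t=1}^{d3} ( |a_{ijk}a_{pqt} − a_{ijt}a_{pqk}|² + |a_{ijk}a_{pqt} − a_{iqk}a_{pjt}|² + |a_{ijk}a_{pqt} − a_{pjk}a_{iqt}|² ). -/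
open scoped BigOperators

namespace Stmt5

/-- The (unnormalized) projector `|v⟩⟨v|` associated to a vector `v`. -/
noncomputable def outer {I : Type*} (v : I → ℂ) : Matrix I I ℂ :=
  Matrix.of fun x y => v x * (starRingEnd ℂ) (v y)

variable {d1 d2 d3 : ℕ}

/-- `tr(ρ_α²)` for `α = {1}`. -/
noncomputable def tr1sq (ρ : Matrix (Fin d1 × Fin d2 × Fin d3) (Fin d1 × Fin d2 × Fin d3) ℂ) : ℂ :=
  ∑ i, ∑ p, (∑ j, ∑ k, ρ (i, j, k) (p, j, k)) * (∑ j, ∑ k, ρ (p, j, k) (i, j, k))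

/-- `tr(ρ_α²)` for `α = {2}`. -/
noncomputable def tr2sq (ρ : Matrix (Fin d1 × Fin d2 × Fin d3) (Fin d1 × Fin d2 × Fin d3) ℂ) : ℂ :=
  ∑ j, ∑ q, (∑ i, ∑ k, ρ (i, j, k) (i, q, k)) * (∑ i, ∑ k, ρ (i, q, k) (i, j, k))

/-- `tr(ρ_α²)` for `α = {3}`. -/
noncomputable def tr3sq (ρ : Matrix (Fin d1 × Fin d2 × Fin d3) (Fin d1 × Fin d2 × Fin d3) ℂ) : ℂ :=
  ∑ k, ∑ t, (∑ i, ∑ j, ρ (i, j, k) (i, j, t)) * (∑ i, ∑ j, ρ (i, j, t) (i, j, k))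

/-- `tr(ρ_α²)` for `α = {1,2}`. -/
noncomputable def tr12sq (ρ : Matrix (Fin d1 × Fin d2 × Fin d3) (Fin d1 × Fin d2 × Fin d3) ℂ) : ℂ :=
  ∑ i, ∑ p, ∑ j, ∑ q, (∑ k, ρ (i, j, k) (p, q, k)) * (∑ k, ρ (p, q, k) (i, j, k))

/-- `tr(ρ_α²)` for `α = {1,3}`. -/
noncomputable def tr13sq (ρ : Matrix (Fin d1 × Fin d2 × Fin d3) (Fin d1 × Fin d2 × Fin d3) ℂ) : ℂ :=
  ∑ i, ∑ p, ∑ k, ∑ t, (∑ j, ρ (i, j, k) (p, j, t)) * (∑ j, ρ (p, j, t) (i, j, k))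

/-- `tr(ρ_α²)` for `α = {2,3}`. -/
noncomputable def tr23sq (ρ : Matrix (Fin d1 × Fin d2 × Fin d3) (Fin d1 × Fin d2 × Fin d3) ℂ) : ℂ :=
  ∑ j, ∑ q, ∑ k, ∑ t, (∑ i, ρ (i, j, k) (i, q, t)) * (∑ i, ρ (i, q, t) (i, j, k))

/-- Tripartite pure-state concurrence
`C₃(|φ⟩) = 2^{1−3/2} √((2³−2) − Σ_α tr(ρ_α²))`, where `α` runs over the six
nonempty proper subsets of `{1,2,3}`. -/
noncomputable def pureC3 (φ : Fin d1 × Fin d2 × Fin d3 → ℂ) : ℝ :=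
  (2 : ℝ) ^ ((1 : ℝ) - (3 : ℝ) / 2) *
    Real.sqrt (((2 : ℝ) ^ (3 : ℕ) - 2) -
      (tr1sq (outer φ) + tr2sq (outer φ) + tr3sq (outer φ) +
        tr12sq (outer φ) + tr13sq (outer φ) + tr23sq (outer φ)).re)

section Helpers

variable {ι κ A B C D : Type*} [Fintype ι] [Fintype κ] [Fintype A] [Fintype B] [Fintype C] [Fintype D]

lemma split4 (f g : ι → κ → ℂ) :
    ∑ i, ∑ k, ∑ p, ∑ t, f i k * g p t = (∑ i, ∑ k, f i k) * (∑ p, ∑ t, g p t) := by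
  symm; simp only [Finset.sum_mul]; simp only [Finset.mul_sum]

lemma comm_mid (h : A → B → C → D → ℂ) :
    ∑ i, ∑ p, ∑ k, ∑ t, h i p k t = ∑ i, ∑ k, ∑ p, ∑ t, h i p k t :=
  Finset.sum_congr rfl fun _ _ => Finset.sum_comm

lemma comm4 (h : ι → ι → κ → κ → ℂ) :
    ∑ i, ∑ p, ∑ k, ∑ t, h i p k t = ∑ k, ∑ t, ∑ i, ∑ p, h i p k t := by
  have := Fintype.sum_equiv (Equiv.prodComm (ι × ι) (κ × κ))
    (fun x : (ι × ι) × κ × κ => h x.1.1 x.1.2 x.2.1 x.2.2)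
    (fun x : (κ × κ) × ι × ι => h x.2.1 x.2.2 x.1.1 x.1.2) (fun _ => rfl)
  simpa [Fintype.sum_prod_type] using this

lemma key (b : ι → κ → ℂ) (hb : (∑ i, ∑ k, ((Complex.normSq (b i k) : ℝ) : ℂ)) = 1) :
    ∑ i, ∑ p, ∑ k, ∑ t, ((Complex.normSq (b i k * b p t - b i t * b p k) : ℝ) : ℂ)
      = 2 - (∑ k, ∑ t, (∑ i, b i k * (starRingEnd ℂ) (b i t)) * (∑ i, b i t * (starRingEnd ℂ) (b i k)))
          - (∑ i, ∑ p, (∑ k, b i k * (starRingEnd ℂ) (b p k)) * (∑ k, b p k * (starRingEnd ℂ) (b i k))) := by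
  have expand : ∀ i p k t, ((Complex.normSq (b i k * b p t - b i t * b p k) : ℝ) : ℂ)
      = ((Complex.normSq (b i k) : ℝ) : ℂ) * ((Complex.normSq (b p t) : ℝ) : ℂ)
        + ((Complex.normSq (b i t) : ℝ) : ℂ) * ((Complex.normSq (b p k) : ℝ) : ℂ)
        - (b i k * (starRingEnd ℂ) (b i t)) * (b p t * (starRingEnd ℂ) (b p k))
        - (b p k * (starRingEnd ℂ) (b i k)) * (b i t * (starRingEnd ℂ) (b p t)) := by
    intro i p k t
    simp only [← Complex.mul_conj, map_sub, map_mul]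
    ring
  simp only [expand, Finset.sum_add_distrib, Finset.sum_sub_distrib]
  have hA : ∑ i, ∑ p, ∑ k, ∑ t, ((Complex.normSq (b i k) : ℝ) : ℂ) * ((Complex.normSq (b p t) : ℝ) : ℂ) = 1 := by
    rw [comm_mid, split4, hb, one_mul]
  have hB : ∑ i, ∑ p, ∑ k, ∑ t, ((Complex.normSq (b i t) : ℝ) : ℂ) * ((Complex.normSq (b p k) : ℝ) : ℂ) = 1 := by
    have step : ∀ i p : ι, ∑ k, ∑ t, ((Complex.normSq (b i t) : ℝ) : ℂ) * ((Complex.normSq (b p k) : ℝ) : ℂ)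
        = ∑ t, ∑ k, ((Complex.normSq (b i t) : ℝ) : ℂ) * ((Complex.normSq (b p k) : ℝ) : ℂ) :=
      fun i p => Finset.sum_comm
    simp only [step]
    rw [comm_mid (fun i p t k => ((Complex.normSq (b i t) : ℝ) : ℂ) * ((Complex.normSq (b p k) : ℝ) : ℂ)),
      split4, hb, one_mul]
  have hC : ∑ i, ∑ p, ∑ k, ∑ t, (b i k * (starRingEnd ℂ) (b i t)) * (b p t * (starRingEnd ℂ) (b p k))
      = ∑ k, ∑ t, (∑ i, b i k * (starRingEnd ℂ) (b i t)) * (∑ i, b i t * (starRingEnd ℂ) (b i k)) := by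
    rw [comm4]
    refine Finset.sum_congr rfl fun k _ => Finset.sum_congr rfl fun t _ => ?_
    rw [Finset.sum_mul_sum]
  have hD : ∑ i, ∑ p, ∑ k, ∑ t, (b p k * (starRingEnd ℂ) (b i k)) * (b i t * (starRingEnd ℂ) (b p t))
      = ∑ i, ∑ p, (∑ k, b i k * (starRingEnd ℂ) (b p k)) * (∑ k, b p k * (starRingEnd ℂ) (b i k)) := by
    refine Finset.sum_congr rfl fun i _ => Finset.sum_congr rfl fun p _ => ?_
    rw [Finset.sum_mul_sum, Finset.sum_comm]
    exact Finset.sum_congr rfl fun _ _ => Finset.sum_congr rfl fun _ _ => by ring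
  rw [hA, hB, hC, hD]
  ring

end Helpers

lemma inst1 (a : Fin d1 × Fin d2 × Fin d3 → ℂ)
    (haC' : ∑ i, ∑ j, ∑ k, ((Complex.normSq (a (i,j,k)) : ℝ) : ℂ) = 1) :
    ∑ i, ∑ p, ∑ j, ∑ q, ∑ k, ∑ t,
        ((Complex.normSq (a (i,j,k) * a (p,q,t) - a (i,j,t) * a (p,q,k)) : ℝ) : ℂ)
      = 2 - tr3sq (outer a) - tr12sq (outer a) := by
  have hb : (∑ x : Fin d1 × Fin d2, ∑ k : Fin d3,
      ((Complex.normSq (a (x.1, x.2, k)) : ℝ) : ℂ)) = 1 := by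
    simp only [Fintype.sum_prod_type]
    exact haC'
  have h := key (fun (x : Fin d1 × Fin d2) (k : Fin d3) => a (x.1, x.2, k)) hb
  simp only [Fintype.sum_prod_type] at h
  simp only [tr3sq, tr12sq, outer, Matrix.of_apply]
  conv_lhs => enter [2, i]; rw [Finset.sum_comm]
  rw [h]
  congr 1
  exact Finset.sum_congr rfl fun _ _ => Finset.sum_comm

lemma inst2 (a : Fin d1 × Fin d2 × Fin d3 → ℂ)
    (haC' : ∑ i, ∑ j, ∑ k, ((Complex.normSq (a (i,j,k)) : ℝ) : ℂ) = 1) :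
    ∑ i, ∑ p, ∑ j, ∑ q, ∑ k, ∑ t,
        ((Complex.normSq (a (i,j,k) * a (p,q,t) - a (i,q,k) * a (p,j,t)) : ℝ) : ℂ)
      = 2 - tr2sq (outer a) - tr13sq (outer a) := by
  have hb : (∑ x : Fin d1 × Fin d3, ∑ j : Fin d2,
      ((Complex.normSq (a (x.1, j, x.2)) : ℝ) : ℂ)) = 1 := by
    simp only [Fintype.sum_prod_type]
    rw [show (∑ i, ∑ k : Fin d3, ∑ j : Fin d2, ((Complex.normSq (a (i, j, k)) : ℝ) : ℂ))
        = ∑ i, ∑ j, ∑ k, ((Complex.normSq (a (i, j, k)) : ℝ) : ℂ) from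
      Finset.sum_congr rfl fun _ _ => Finset.sum_comm]
    exact haC'
  have h := key (fun (x : Fin d1 × Fin d3) (j : Fin d2) => a (x.1, j, x.2)) hb
  simp only [Fintype.sum_prod_type] at h
  simp only [tr2sq, tr13sq, outer, Matrix.of_apply]
  conv_lhs => enter [2, i, 2, p, 2, j]; rw [Finset.sum_comm]
  conv_lhs => enter [2, i, 2, p]; rw [Finset.sum_comm]
  conv_lhs => enter [2, i]; rw [Finset.sum_comm]
  conv_lhs => enter [2, i, 2, k, 2, p, 2, j]; rw [Finset.sum_comm]
  conv_lhs => enter [2, i, 2, k, 2, p]; rw [Finset.sum_comm]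
  rw [h]
  congr 1
  exact Finset.sum_congr rfl fun _ _ => Finset.sum_comm

lemma inst3 (a : Fin d1 × Fin d2 × Fin d3 → ℂ)
    (haC' : ∑ i, ∑ j, ∑ k, ((Complex.normSq (a (i,j,k)) : ℝ) : ℂ) = 1) :
    ∑ i, ∑ p, ∑ j, ∑ q, ∑ k, ∑ t,
        ((Complex.normSq (a (i,j,k) * a (p,q,t) - a (p,j,k) * a (i,q,t)) : ℝ) : ℂ)
      = 2 - tr1sq (outer a) - tr23sq (outer a) := by
  have hb : (∑ x : Fin d2 × Fin d3, ∑ i : Fin d1,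
      ((Complex.normSq (a (i, x.1, x.2)) : ℝ) : ℂ)) = 1 := by
    simp only [Fintype.sum_prod_type]
    rw [show (∑ j : Fin d2, ∑ k : Fin d3, ∑ i, ((Complex.normSq (a (i, j, k)) : ℝ) : ℂ))
        = ∑ j, ∑ i, ∑ k, ((Complex.normSq (a (i, j, k)) : ℝ) : ℂ) from
      Finset.sum_congr rfl fun _ _ => Finset.sum_comm]
    rw [show (∑ j : Fin d2, ∑ i, ∑ k : Fin d3, ((Complex.normSq (a (i, j, k)) : ℝ) : ℂ))
        = ∑ i, ∑ j, ∑ k, ((Complex.normSq (a (i, j, k)) : ℝ) : ℂ) from Finset.sum_comm]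
    exact haC'
  have h := key (fun (x : Fin d2 × Fin d3) (i : Fin d1) => a (i, x.1, x.2)) hb
  simp only [Fintype.sum_prod_type] at h
  simp only [tr1sq, tr23sq, outer, Matrix.of_apply]
  conv_lhs => enter [2, i]; rw [Finset.sum_comm]
  conv_lhs => rw [Finset.sum_comm]
  conv_lhs => enter [2, j, 2, i, 2, p]; rw [Finset.sum_comm]
  conv_lhs => enter [2, j, 2, i]; rw [Finset.sum_comm]
  conv_lhs => enter [2, j]; rw [Finset.sum_comm]
  conv_lhs => enter [2, j, 2, k, 2, i]; rw [Finset.sum_comm]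
  conv_lhs => enter [2, j, 2, k]; rw [Finset.sum_comm]
  conv_lhs => enter [2, j, 2, k, 2, q, 2, i]; rw [Finset.sum_comm]
  conv_lhs => enter [2, j, 2, k, 2, q]; rw [Finset.sum_comm]
  rw [h]
  congr 1
  exact Finset.sum_congr rfl fun _ _ => Finset.sum_comm

lemma coeff_sq : ((2:ℝ) ^ ((1:ℝ) - (3:ℝ)/2))^2 = 1/2 := by
  rw [← Real.rpow_natCast ((2:ℝ) ^ ((1:ℝ) - (3:ℝ)/2)) 2,
    ← Real.rpow_mul (by norm_num : (0:ℝ) ≤ 2)]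
  rw [show ((1:ℝ) - (3:ℝ)/2) * ((2:ℕ) : ℝ) = ((-1 : ℤ) : ℝ) by push_cast; ring,
    Real.rpow_intCast]
  norm_num

/-- for a unit vector `|phi> = sum a_{ijk}|ijk>` in
`C^{d1} (x) C^{d2} (x) C^{d3}`, the squared tripartite concurrence equals the
coefficient formula. -/
theorem stmt_5 (a : Fin d1 × Fin d2 × Fin d3 → ℂ)
    (ha : ∑ x, Complex.normSq (a x) = 1) :
    (pureC3 a) ^ 2 =
      (1 / 2) * ∑ i, ∑ p, ∑ j, ∑ q, ∑ k, ∑ t,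
        (‖a (i, j, k) * a (p, q, t) - a (i, j, t) * a (p, q, k)‖ ^ 2 +
         ‖a (i, j, k) * a (p, q, t) - a (i, q, k) * a (p, j, t)‖ ^ 2 +
         ‖a (i, j, k) * a (p, q, t) - a (p, j, k) * a (i, q, t)‖ ^ 2) := by
  have haC' : ∑ i, ∑ j, ∑ k, ((Complex.normSq (a (i,j,k)) : ℝ) : ℂ) = 1 := by
    have h0 : ((∑ x, Complex.normSq (a x) : ℝ) : ℂ) = 1 := by rw [ha]; norm_num
    rw [Complex.ofReal_sum] at h0
    simpa [Fintype.sum_prod_type] using h0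
  have h1 := inst1 a haC'
  have h2 := inst2 a haC'
  have h3 := inst3 a haC'
  unfold pureC3
  set S : ℂ := tr1sq (outer a) + tr2sq (outer a) + tr3sq (outer a) +
      tr12sq (outer a) + tr13sq (outer a) + tr23sq (outer a) with hSdef
  set T : ℝ := ∑ i, ∑ p, ∑ j, ∑ q, ∑ k, ∑ t,
        (‖a (i, j, k) * a (p, q, t) - a (i, j, t) * a (p, q, k)‖ ^ 2 +
         ‖a (i, j, k) * a (p, q, t) - a (i, q, k) * a (p, j, t)‖ ^ 2 +
         ‖a (i, j, k) * a (p, q, t) - a (p, j, k) * a (i, q, t)‖ ^ 2) with hTdef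
  have hcast : ((T : ℝ) : ℂ) = ∑ i, ∑ p, ∑ j, ∑ q, ∑ k, ∑ t,
      (((Complex.normSq (a (i,j,k) * a (p,q,t) - a (i,j,t) * a (p,q,k)) : ℝ) : ℂ) +
       ((Complex.normSq (a (i,j,k) * a (p,q,t) - a (i,q,k) * a (p,j,t)) : ℝ) : ℂ) +
       ((Complex.normSq (a (i,j,k) * a (p,q,t) - a (p,j,k) * a (i,q,t)) : ℝ) : ℂ)) := by
    rw [hTdef]
    simp only [Complex.sq_norm, Complex.ofReal_sum, Complex.ofReal_add]
  have hsum : ∑ i, ∑ p, ∑ j, ∑ q, ∑ k, ∑ t,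
      (((Complex.normSq (a (i,j,k) * a (p,q,t) - a (i,j,t) * a (p,q,k)) : ℝ) : ℂ) +
       ((Complex.normSq (a (i,j,k) * a (p,q,t) - a (i,q,k) * a (p,j,t)) : ℝ) : ℂ) +
       ((Complex.normSq (a (i,j,k) * a (p,q,t) - a (p,j,k) * a (i,q,t)) : ℝ) : ℂ)) = 6 - S := by
    simp only [Finset.sum_add_distrib]
    rw [h1, h2, h3, hSdef]
    ring
  have hS : S = 6 - ((T : ℝ) : ℂ) := by rw [hcast, hsum]; ring
  have hre : S.re = 6 - T := by
    rw [hS]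
    simp [Complex.sub_re]
  have hT0 : (0:ℝ) ≤ T := by
    rw [hTdef]
    positivity
  have hX : ((2:ℝ) ^ (3:ℕ) - 2) - S.re = T := by rw [hre]; ring
  rw [mul_pow, hX, Real.sq_sqrt hT0, coeff_sq]

end Stmt5
end

section
/- Let |φ⟩ = Σ a_{ijkr}|ijkr⟩ be a unit vector in ℂ^{d1}⊗ℂ^{d2}⊗ℂ^{d3}⊗ℂ^{d4} with Σ|a_{ijkr}|² = 1, and let ρ_α denote the reduced density matrices of |φ⟩⟨φ|. Then the following seven identities hold, where all sums run over i,p = 1..d1, j,q = 1..d2, k,t = 1..d3, r,h = 1..d4: 1 − tr(ρ_1²) = (1/2) Σ |a_{ijkr}a_{pqth} − a_{pjkr}a_{iqth}|²; 1 − tr(ρ_2²) = (1/2) Σ |a_{ijkr}a_{pqth} − a_{iqkr}a_{pjth}|²; 1 − tr(ρ_3²) = (1/2) Σ |a_{ijkr}a_{pqth} − a_{ijtr}a_{pqkh}|²; 1 − tr(ρ_4²) = (1/2) Σ |a_{ijkr}a_{pqth} − a_{ijkh}a_{pqtr}|²; 1 − tr(ρ_{12}²) = (1/2) Σ |a_{ijkr}a_{pqth}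 − a_{ijth}a_{pqkr}|²; 1 − tr(ρ_{13}²) = (1/2) Σ |a_{ijkr}a_{pqth} − a_{pjtr}a_{iqkh}|²; 1 − tr(ρ_{14}²) = (1/2) Σ |a_{ijkr}a_{pqth} − a_{pjkh}a_{iqtr}|². -/
open scoped BigOperators

namespace Stmt12

/-- The (unnormalized) projector `|v⟩⟨v|` associated to a vector `v`. -/
noncomputable def outer {I : Type*} (v : I → ℂ) : Matrix I I ℂ :=
  Matrix.of fun x y => v x * (starRingEnd ℂ) (v y)

variable {d1 d2 d3 d4 : ℕ}

/-- `tr(ρ_α²)` for `α = {1}`. -/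
noncomputable def t1sq
    (ρ : Matrix (Fin d1 × Fin d2 × Fin d3 × Fin d4) (Fin d1 × Fin d2 × Fin d3 × Fin d4) ℂ) : ℂ :=
  ∑ i, ∑ p, (∑ j, ∑ k, ∑ r, ρ (i, j, k, r) (p, j, k, r)) * (∑ j, ∑ k, ∑ r, ρ (p, j, k, r) (i, j, k, r))

/-- `tr(ρ_α²)` for `α = {2}`. -/
noncomputable def t2sq
    (ρ : Matrix (Fin d1 × Fin d2 × Fin d3 × Fin d4) (Fin d1 × Fin d2 × Fin d3 × Fin d4) ℂ) : ℂ :=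
  ∑ j, ∑ q, (∑ i, ∑ k, ∑ r, ρ (i, j, k, r) (i, q, k, r)) * (∑ i, ∑ k, ∑ r, ρ (i, q, k, r) (i, j, k, r))

/-- `tr(ρ_α²)` for `α = {3}`. -/
noncomputable def t3sq
    (ρ : Matrix (Fin d1 × Fin d2 × Fin d3 × Fin d4) (Fin d1 × Fin d2 × Fin d3 × Fin d4) ℂ) : ℂ :=
  ∑ k, ∑ t, (∑ i, ∑ j, ∑ r, ρ (i, j, k, r) (i, j, t, r)) * (∑ i, ∑ j, ∑ r, ρ (i, j, t, r) (i, j, k, r))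

/-- `tr(ρ_α²)` for `α = {4}`. -/
noncomputable def t4sq
    (ρ : Matrix (Fin d1 × Fin d2 × Fin d3 × Fin d4) (Fin d1 × Fin d2 × Fin d3 × Fin d4) ℂ) : ℂ :=
  ∑ r, ∑ h, (∑ i, ∑ j, ∑ k, ρ (i, j, k, r) (i, j, k, h)) * (∑ i, ∑ j, ∑ k, ρ (i, j, k, h) (i, j, k, r))

/-- `tr(ρ_α²)` for `α = {1,2}`. -/
noncomputable def t12sq
    (ρ : Matrix (Fin d1 × Fin d2 × Fin d3 × Fin d4) (Fin d1 × Fin d2 × Fin d3 × Fin d4) ℂ) : ℂ :=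
  ∑ i, ∑ p, ∑ j, ∑ q, (∑ k, ∑ r, ρ (i, j, k, r) (p, q, k, r)) * (∑ k, ∑ r, ρ (p, q, k, r) (i, j, k, r))

/-- `tr(ρ_α²)` for `α = {1,3}`. -/
noncomputable def t13sq
    (ρ : Matrix (Fin d1 × Fin d2 × Fin d3 × Fin d4) (Fin d1 × Fin d2 × Fin d3 × Fin d4) ℂ) : ℂ :=
  ∑ i, ∑ p, ∑ k, ∑ t, (∑ j, ∑ r, ρ (i, j, k, r) (p, j, t, r)) * (∑ j, ∑ r, ρ (p, j, t, r) (i, j, k, r))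

/-- `tr(ρ_α²)` for `α = {1,4}`. -/
noncomputable def t14sq
    (ρ : Matrix (Fin d1 × Fin d2 × Fin d3 × Fin d4) (Fin d1 × Fin d2 × Fin d3 × Fin d4) ℂ) : ℂ :=
  ∑ i, ∑ p, ∑ r, ∑ h, (∑ j, ∑ k, ρ (i, j, k, r) (p, j, k, h)) * (∑ j, ∑ k, ρ (p, j, k, h) (i, j, k, r))

/-- `tr(ρ_α²)` for `α = {2,3}`. -/
noncomputable def t23sq
    (ρ : Matrix (Fin d1 × Fin d2 × Fin d3 × Fin d4) (Fin d1 × Fin d2 × Fin d3 × Fin d4) ℂ) : ℂ :=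
  ∑ j, ∑ q, ∑ k, ∑ t, (∑ i, ∑ r, ρ (i, j, k, r) (i, q, t, r)) * (∑ i, ∑ r, ρ (i, q, t, r) (i, j, k, r))

/-- `tr(ρ_α²)` for `α = {2,4}`. -/
noncomputable def t24sq
    (ρ : Matrix (Fin d1 × Fin d2 × Fin d3 × Fin d4) (Fin d1 × Fin d2 × Fin d3 × Fin d4) ℂ) : ℂ :=
  ∑ j, ∑ q, ∑ r, ∑ h, (∑ i, ∑ k, ρ (i, j, k, r) (i, q, k, h)) * (∑ i, ∑ k, ρ (i, q, k, h) (i, j, k, r))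

/-- `tr(ρ_α²)` for `α = {3,4}`. -/
noncomputable def t34sq
    (ρ : Matrix (Fin d1 × Fin d2 × Fin d3 × Fin d4) (Fin d1 × Fin d2 × Fin d3 × Fin d4) ℂ) : ℂ :=
  ∑ k, ∑ t, ∑ r, ∑ h, (∑ i, ∑ j, ρ (i, j, k, r) (i, j, t, h)) * (∑ i, ∑ j, ρ (i, j, t, h) (i, j, k, r))

/-- `tr(ρ_α²)` for `α = {1,2,3}`. -/
noncomputable def t123sq
    (ρ : Matrix (Fin d1 × Fin d2 × Fin d3 × Fin d4) (Fin d1 × Fin d2 × Fin d3 × Fin d4) ℂ) : ℂ :=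
  ∑ i, ∑ p, ∑ j, ∑ q, ∑ k, ∑ t, (∑ r, ρ (i, j, k, r) (p, q, t, r)) * (∑ r, ρ (p, q, t, r) (i, j, k, r))

/-- `tr(ρ_α²)` for `α = {1,2,4}`. -/
noncomputable def t124sq
    (ρ : Matrix (Fin d1 × Fin d2 × Fin d3 × Fin d4) (Fin d1 × Fin d2 × Fin d3 × Fin d4) ℂ) : ℂ :=
  ∑ i, ∑ p, ∑ j, ∑ q, ∑ r, ∑ h, (∑ k, ρ (i, j, k, r) (p, q, k, h)) * (∑ k, ρ (p, q, k, h) (i, j, k, r))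

/-- `tr(ρ_α²)` for `α = {1,3,4}`. -/
noncomputable def t134sq
    (ρ : Matrix (Fin d1 × Fin d2 × Fin d3 × Fin d4) (Fin d1 × Fin d2 × Fin d3 × Fin d4) ℂ) : ℂ :=
  ∑ i, ∑ p, ∑ k, ∑ t, ∑ r, ∑ h, (∑ j, ρ (i, j, k, r) (p, j, t, h)) * (∑ j, ρ (p, j, t, h) (i, j, k, r))

/-- `tr(ρ_α²)` for `α = {2,3,4}`. -/
noncomputable def t234sq
    (ρ : Matrix (Fin d1 × Fin d2 × Fin d3 × Fin d4) (Fin d1 × Fin d2 × Fin d3 × Fin d4) ℂ) : ℂ :=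
  ∑ j, ∑ q, ∑ k, ∑ t, ∑ r, ∑ h, (∑ i, ρ (i, j, k, r) (i, q, t, h)) * (∑ i, ρ (i, q, t, h) (i, j, k, r))

/-- Four-partite pure-state concurrence
`C₄(|φ⟩) = 2^{1−4/2} √((2⁴−2) − Σ_α tr(ρ_α²))`, where `α` runs over the
fourteen nonempty proper subsets of `{1,2,3,4}`. -/
noncomputable def pureC4 (φ : Fin d1 × Fin d2 × Fin d3 × Fin d4 → ℂ) : ℝ :=
  (2 : ℝ) ^ ((1 : ℝ) - (4 : ℝ) / 2) *
    Real.sqrt (((2 : ℝ) ^ (4 : ℕ) - 2) -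
      (t1sq (outer φ) +
        t2sq (outer φ) +
        t3sq (outer φ) +
        t4sq (outer φ) +
        t12sq (outer φ) +
        t13sq (outer φ) +
        t14sq (outer φ) +
        t23sq (outer φ) +
        t24sq (outer φ) +
        t34sq (outer φ) +
        t123sq (outer φ) +
        t124sq (outer φ) +
        t134sq (outer φ) +
        t234sq (outer φ)).re)



abbrev I4 (d1 d2 d3 d4 : ℕ) := Fin d1 × Fin d2 × Fin d3 × Fin d4

/-- Generic expansion lemma: `1 - Re⟨F,G⟩ = (1/2) Σ |F - G|²` for unit vectors. -/
lemma key {ι : Type*} [Fintype ι] (F G : ι → ℂ)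
    (hF : ∑ x, Complex.normSq (F x) = 1) (hG : ∑ x, Complex.normSq (G x) = 1) :
    1 - (∑ x, F x * (starRingEnd ℂ) (G x)).re
      = (1 / 2) * ∑ x, ‖F x - G x‖ ^ 2 := by
  have h : ∀ x : ι, ‖F x - G x‖ ^ 2
      = Complex.normSq (F x) + Complex.normSq (G x)
        - 2 * (F x * (starRingEnd ℂ) (G x)).re := by
    intro x; rw [Complex.sq_norm, Complex.normSq_sub]
  rw [Finset.sum_congr rfl fun x _ => h x]
  rw [Finset.sum_sub_distrib, Finset.sum_add_distrib, hF, hG, ← Finset.mul_sum, Complex.re_sum]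
  ring

def eC : ((Fin d1 × Fin d1) × (Fin d2 × Fin d2) × (Fin d3 × Fin d3) × (Fin d4 × Fin d4)) ≃
    (I4 d1 d2 d3 d4 × I4 d1 d2 d3 d4) where
  toFun x := ((x.1.1, x.2.1.1, x.2.2.1.1, x.2.2.2.1), (x.1.2, x.2.1.2, x.2.2.1.2, x.2.2.2.2))
  invFun y := ((y.1.1, y.2.1), (y.1.2.1, y.2.2.1), (y.1.2.2.1, y.2.2.2.1), (y.1.2.2.2, y.2.2.2.2))
  left_inv _ := rfl
  right_inv _ := rfl

def e2 : ((Fin d2 × Fin d2) × (Fin d1 × Fin d1) × (Fin d3 × Fin d3) × (Fin d4 × Fin d4)) ≃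
    (I4 d1 d2 d3 d4 × I4 d1 d2 d3 d4) where
  toFun x := ((x.2.1.1, x.1.1, x.2.2.1.1, x.2.2.2.1), (x.2.1.2, x.1.2, x.2.2.1.2, x.2.2.2.2))
  invFun y := ((y.1.2.1, y.2.2.1), (y.1.1, y.2.1), (y.1.2.2.1, y.2.2.2.1), (y.1.2.2.2, y.2.2.2.2))
  left_inv _ := rfl
  right_inv _ := rfl

def e3 : ((Fin d3 × Fin d3) × (Fin d1 × Fin d1) × (Fin d2 × Fin d2) × (Fin d4 × Fin d4)) ≃
    (I4 d1 d2 d3 d4 × I4 d1 d2 d3 d4) where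
  toFun x := ((x.2.1.1, x.2.2.1.1, x.1.1, x.2.2.2.1), (x.2.1.2, x.2.2.1.2, x.1.2, x.2.2.2.2))
  invFun y := ((y.1.2.2.1, y.2.2.2.1), (y.1.1, y.2.1), (y.1.2.1, y.2.2.1), (y.1.2.2.2, y.2.2.2.2))
  left_inv _ := rfl
  right_inv _ := rfl

def e4 : ((Fin d4 × Fin d4) × (Fin d1 × Fin d1) × (Fin d2 × Fin d2) × (Fin d3 × Fin d3)) ≃
    (I4 d1 d2 d3 d4 × I4 d1 d2 d3 d4) where
  toFun x := ((x.2.1.1, x.2.2.1.1, x.2.2.2.1, x.1.1), (x.2.1.2, x.2.2.1.2, x.2.2.2.2, x.1.2))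
  invFun y := ((y.1.2.2.2, y.2.2.2.2), (y.1.1, y.2.1), (y.1.2.1, y.2.2.1), (y.1.2.2.1, y.2.2.2.1))
  left_inv _ := rfl
  right_inv _ := rfl

def e13 : ((Fin d1 × Fin d1) × (Fin d3 × Fin d3) × (Fin d2 × Fin d2) × (Fin d4 × Fin d4)) ≃
    (I4 d1 d2 d3 d4 × I4 d1 d2 d3 d4) where
  toFun x := ((x.1.1, x.2.2.1.1, x.2.1.1, x.2.2.2.1), (x.1.2, x.2.2.1.2, x.2.1.2, x.2.2.2.2))
  invFun y := ((y.1.1, y.2.1), (y.1.2.2.1, y.2.2.2.1), (y.1.2.1, y.2.2.1), (y.1.2.2.2, y.2.2.2.2))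
  left_inv _ := rfl
  right_inv _ := rfl

def e14 : ((Fin d1 × Fin d1) × (Fin d4 × Fin d4) × (Fin d2 × Fin d2) × (Fin d3 × Fin d3)) ≃
    (I4 d1 d2 d3 d4 × I4 d1 d2 d3 d4) where
  toFun x := ((x.1.1, x.2.2.1.1, x.2.2.2.1, x.2.1.1), (x.1.2, x.2.2.1.2, x.2.2.2.2, x.2.1.2))
  invFun y := ((y.1.1, y.2.1), (y.1.2.2.2, y.2.2.2.2), (y.1.2.1, y.2.2.1), (y.1.2.2.1, y.2.2.2.1))
  left_inv _ := rfl
  right_inv _ := rfl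

lemma flatC {M : Type*} [AddCommMonoid M] (f : I4 d1 d2 d3 d4 → I4 d1 d2 d3 d4 → M) :
    (∑ i, ∑ p, ∑ j, ∑ q, ∑ k, ∑ t, ∑ r, ∑ h, f (i, j, k, r) (p, q, t, h))
      = ∑ y : I4 d1 d2 d3 d4 × I4 d1 d2 d3 d4, f y.1 y.2 := by
  rw [← Equiv.sum_comp (eC) (fun y : I4 d1 d2 d3 d4 × I4 d1 d2 d3 d4 => f y.1 y.2)]
  simp only [Fintype.sum_prod_type, eC, Equiv.coe_fn_mk]

lemma flat2 {M : Type*} [AddCommMonoid M] (f : I4 d1 d2 d3 d4 → I4 d1 d2 d3 d4 → M) :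
    (∑ j, ∑ q, ∑ i, ∑ p, ∑ k, ∑ t, ∑ r, ∑ h, f (i, j, k, r) (p, q, t, h))
      = ∑ y : I4 d1 d2 d3 d4 × I4 d1 d2 d3 d4, f y.1 y.2 := by
  rw [← Equiv.sum_comp (e2) (fun y : I4 d1 d2 d3 d4 × I4 d1 d2 d3 d4 => f y.1 y.2)]
  simp only [Fintype.sum_prod_type, e2, Equiv.coe_fn_mk]

lemma flat3 {M : Type*} [AddCommMonoid M] (f : I4 d1 d2 d3 d4 → I4 d1 d2 d3 d4 → M) :
    (∑ k, ∑ t, ∑ i, ∑ p, ∑ j, ∑ q, ∑ r, ∑ h, f (i, j, k, r) (p, q, t, h))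
      = ∑ y : I4 d1 d2 d3 d4 × I4 d1 d2 d3 d4, f y.1 y.2 := by
  rw [← Equiv.sum_comp (e3) (fun y : I4 d1 d2 d3 d4 × I4 d1 d2 d3 d4 => f y.1 y.2)]
  simp only [Fintype.sum_prod_type, e3, Equiv.coe_fn_mk]

lemma flat4 {M : Type*} [AddCommMonoid M] (f : I4 d1 d2 d3 d4 → I4 d1 d2 d3 d4 → M) :
    (∑ r, ∑ h, ∑ i, ∑ p, ∑ j, ∑ q, ∑ k, ∑ t, f (i, j, k, r) (p, q, t, h))
      = ∑ y : I4 d1 d2 d3 d4 × I4 d1 d2 d3 d4, f y.1 y.2 := by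
  rw [← Equiv.sum_comp (e4) (fun y : I4 d1 d2 d3 d4 × I4 d1 d2 d3 d4 => f y.1 y.2)]
  simp only [Fintype.sum_prod_type, e4, Equiv.coe_fn_mk]

lemma flat13 {M : Type*} [AddCommMonoid M] (f : I4 d1 d2 d3 d4 → I4 d1 d2 d3 d4 → M) :
    (∑ i, ∑ p, ∑ k, ∑ t, ∑ j, ∑ q, ∑ r, ∑ h, f (i, j, k, r) (p, q, t, h))
      = ∑ y : I4 d1 d2 d3 d4 × I4 d1 d2 d3 d4, f y.1 y.2 := by
  rw [← Equiv.sum_comp (e13) (fun y : I4 d1 d2 d3 d4 × I4 d1 d2 d3 d4 => f y.1 y.2)]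
  simp only [Fintype.sum_prod_type, e13, Equiv.coe_fn_mk]

lemma flat14 {M : Type*} [AddCommMonoid M] (f : I4 d1 d2 d3 d4 → I4 d1 d2 d3 d4 → M) :
    (∑ i, ∑ p, ∑ r, ∑ h, ∑ j, ∑ q, ∑ k, ∑ t, f (i, j, k, r) (p, q, t, h))
      = ∑ y : I4 d1 d2 d3 d4 × I4 d1 d2 d3 d4, f y.1 y.2 := by
  rw [← Equiv.sum_comp (e14) (fun y : I4 d1 d2 d3 d4 × I4 d1 d2 d3 d4 => f y.1 y.2)]
  simp only [Fintype.sum_prod_type, e14, Equiv.coe_fn_mk]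

lemma normF (a : I4 d1 d2 d3 d4 → ℂ) (ha : ∑ x, Complex.normSq (a x) = 1) :
    ∑ y : I4 d1 d2 d3 d4 × I4 d1 d2 d3 d4, Complex.normSq (a y.1 * a y.2) = 1 :=
  calc ∑ y : I4 d1 d2 d3 d4 × I4 d1 d2 d3 d4, Complex.normSq (a y.1 * a y.2)
      = ∑ u, ∑ v, Complex.normSq (a u * a v) := Fintype.sum_prod_type _
    _ = (∑ u, Complex.normSq (a u)) * (∑ v, Complex.normSq (a v)) := by
        rw [Finset.sum_mul_sum]
        exact Finset.sum_congr rfl fun u _ => Finset.sum_congr rfl fun v _ =>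
          (Complex.normSq_mul _ _)
    _ = 1 := by rw [ha, one_mul]

lemma normG (a : I4 d1 d2 d3 d4 → ℂ) (ha : ∑ x, Complex.normSq (a x) = 1)
    (σ : I4 d1 d2 d3 d4 × I4 d1 d2 d3 d4 → I4 d1 d2 d3 d4 × I4 d1 d2 d3 d4)
    (hσ : Function.Involutive σ) :
    ∑ y : I4 d1 d2 d3 d4 × I4 d1 d2 d3 d4, Complex.normSq (a (σ y).1 * a (σ y).2) = 1 :=
  (Fintype.sum_bijective σ hσ.bijective _ _ fun _ => rfl).trans (normF a ha)


/-! ### Auxiliary trace-flattening lemmas -/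

lemma trace1 (a : I4 d1 d2 d3 d4 → ℂ) :
    t1sq (outer a) = ∑ y : I4 d1 d2 d3 d4 × I4 d1 d2 d3 d4,
      (a y.1 * a y.2) * (starRingEnd ℂ) (a (y.2.1, y.1.2) * a (y.1.1, y.2.2)) := by
  simp only [t1sq, outer, Matrix.of_apply, Finset.sum_mul_sum]
  exact (flatC (fun u v => (a u * (starRingEnd ℂ) (a (v.1, u.2))) *
      (a v * (starRingEnd ℂ) (a (u.1, v.2))))).trans
    (Finset.sum_congr rfl fun y _ => by rw [map_mul]; ring)

lemma trace2 (a : I4 d1 d2 d3 d4 → ℂ) :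
    t2sq (outer a) = ∑ y : I4 d1 d2 d3 d4 × I4 d1 d2 d3 d4,
      (a y.1 * a y.2) * (starRingEnd ℂ)
        (a (y.1.1, y.2.2.1, y.1.2.2) * a (y.2.1, y.1.2.1, y.2.2.2)) := by
  simp only [t2sq, outer, Matrix.of_apply, Finset.sum_mul_sum]
  exact (flat2 (fun u v => (a u * (starRingEnd ℂ) (a (u.1, v.2.1, u.2.2))) *
      (a v * (starRingEnd ℂ) (a (v.1, u.2.1, v.2.2))))).trans
    (Finset.sum_congr rfl fun y _ => by rw [map_mul]; ring)

lemma trace3 (a : I4 d1 d2 d3 d4 → ℂ) :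
    t3sq (outer a) = ∑ y : I4 d1 d2 d3 d4 × I4 d1 d2 d3 d4,
      (a y.1 * a y.2) * (starRingEnd ℂ)
        (a (y.1.1, y.1.2.1, y.2.2.2.1, y.1.2.2.2) * a (y.2.1, y.2.2.1, y.1.2.2.1, y.2.2.2.2)) := by
  simp only [t3sq, outer, Matrix.of_apply, Finset.sum_mul_sum]
  exact (flat3 (fun u v => (a u * (starRingEnd ℂ) (a (u.1, u.2.1, v.2.2.1, u.2.2.2))) *
      (a v * (starRingEnd ℂ) (a (v.1, v.2.1, u.2.2.1, v.2.2.2))))).trans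
    (Finset.sum_congr rfl fun y _ => by rw [map_mul]; ring)

lemma trace4 (a : I4 d1 d2 d3 d4 → ℂ) :
    t4sq (outer a) = ∑ y : I4 d1 d2 d3 d4 × I4 d1 d2 d3 d4,
      (a y.1 * a y.2) * (starRingEnd ℂ)
        (a (y.1.1, y.1.2.1, y.1.2.2.1, y.2.2.2.2) * a (y.2.1, y.2.2.1, y.2.2.2.1, y.1.2.2.2)) := by
  simp only [t4sq, outer, Matrix.of_apply, Finset.sum_mul_sum]
  exact (flat4 (fun u v => (a u * (starRingEnd ℂ) (a (u.1, u.2.1, u.2.2.1, v.2.2.2))) *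
      (a v * (starRingEnd ℂ) (a (v.1, v.2.1, v.2.2.1, u.2.2.2))))).trans
    (Finset.sum_congr rfl fun y _ => by rw [map_mul]; ring)

lemma trace12 (a : I4 d1 d2 d3 d4 → ℂ) :
    t12sq (outer a) = ∑ y : I4 d1 d2 d3 d4 × I4 d1 d2 d3 d4,
      (a y.1 * a y.2) * (starRingEnd ℂ)
        (a (y.1.1, y.1.2.1, y.2.2.2) * a (y.2.1, y.2.2.1, y.1.2.2)) := by
  simp only [t12sq, outer, Matrix.of_apply, Finset.sum_mul_sum]
  exact (flatC (fun u v => (a u * (starRingEnd ℂ) (a (v.1, v.2.1, u.2.2))) *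
      (a v * (starRingEnd ℂ) (a (u.1, u.2.1, v.2.2))))).trans
    (Finset.sum_congr rfl fun y _ => by rw [map_mul]; ring)

lemma trace13 (a : I4 d1 d2 d3 d4 → ℂ) :
    t13sq (outer a) = ∑ y : I4 d1 d2 d3 d4 × I4 d1 d2 d3 d4,
      (a y.1 * a y.2) * (starRingEnd ℂ)
        (a (y.2.1, y.1.2.1, y.2.2.2.1, y.1.2.2.2) * a (y.1.1, y.2.2.1, y.1.2.2.1, y.2.2.2.2)) := by
  simp only [t13sq, outer, Matrix.of_apply, Finset.sum_mul_sum]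
  exact (flat13 (fun u v => (a u * (starRingEnd ℂ) (a (v.1, u.2.1, v.2.2.1, u.2.2.2))) *
      (a v * (starRingEnd ℂ) (a (u.1, v.2.1, u.2.2.1, v.2.2.2))))).trans
    (Finset.sum_congr rfl fun y _ => by rw [map_mul]; ring)

lemma trace14 (a : I4 d1 d2 d3 d4 → ℂ) :
    t14sq (outer a) = ∑ y : I4 d1 d2 d3 d4 × I4 d1 d2 d3 d4,
      (a y.1 * a y.2) * (starRingEnd ℂ)
        (a (y.2.1, y.1.2.1, y.1.2.2.1, y.2.2.2.2) * a (y.1.1, y.2.2.1, y.2.2.2.1, y.1.2.2.2)) := by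
  simp only [t14sq, outer, Matrix.of_apply, Finset.sum_mul_sum]
  exact (flat14 (fun u v => (a u * (starRingEnd ℂ) (a (v.1, u.2.1, u.2.2.1, v.2.2.2))) *
      (a v * (starRingEnd ℂ) (a (u.1, v.2.1, v.2.2.1, u.2.2.2))))).trans
    (Finset.sum_congr rfl fun y _ => by rw [map_mul]; ring)

set_option maxHeartbeats 2000000 in
/-- for a unit vector `|φ⟩ = Σ a_{ijkr}|ijkr⟩` in
`ℂ^{d1}⊗ℂ^{d2}⊗ℂ^{d3}⊗ℂ^{d4}`, the seven purity identities
`1 − tr(ρ_α²) = (1/2) Σ |a a − a a|²` hold for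
`α = {1},{2},{3},{4},{1,2},{1,3},{1,4}`. -/
theorem stmt_12 (a : Fin d1 × Fin d2 × Fin d3 × Fin d4 → ℂ)
    (ha : ∑ x, Complex.normSq (a x) = 1) :
    ((1 - (t1sq (outer a)).re =
      (1 / 2) * ∑ i, ∑ p, ∑ j, ∑ q, ∑ k, ∑ t, ∑ r, ∑ h,
        ‖a (i, j, k, r) * a (p, q, t, h) - a (p, j, k, r) * a (i, q, t, h)‖ ^ 2) ∧
    (1 - (t2sq (outer a)).re =
      (1 / 2) * ∑ i, ∑ p, ∑ j, ∑ q, ∑ k, ∑ t, ∑ r, ∑ h,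
        ‖a (i, j, k, r) * a (p, q, t, h) - a (i, q, k, r) * a (p, j, t, h)‖ ^ 2) ∧
    (1 - (t3sq (outer a)).re =
      (1 / 2) * ∑ i, ∑ p, ∑ j, ∑ q, ∑ k, ∑ t, ∑ r, ∑ h,
        ‖a (i, j, k, r) * a (p, q, t, h) - a (i, j, t, r) * a (p, q, k, h)‖ ^ 2) ∧
    (1 - (t4sq (outer a)).re =
      (1 / 2) * ∑ i, ∑ p, ∑ j, ∑ q, ∑ k, ∑ t, ∑ r, ∑ h,
        ‖a (i, j, k, r) * a (p, q, t, h) - a (i, j, k, h) * a (p, q, t, r)‖ ^ 2) ∧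
    (1 - (t12sq (outer a)).re =
      (1 / 2) * ∑ i, ∑ p, ∑ j, ∑ q, ∑ k, ∑ t, ∑ r, ∑ h,
        ‖a (i, j, k, r) * a (p, q, t, h) - a (i, j, t, h) * a (p, q, k, r)‖ ^ 2) ∧
    (1 - (t13sq (outer a)).re =
      (1 / 2) * ∑ i, ∑ p, ∑ j, ∑ q, ∑ k, ∑ t, ∑ r, ∑ h,
        ‖a (i, j, k, r) * a (p, q, t, h) - a (p, j, t, r) * a (i, q, k, h)‖ ^ 2) ∧
    (1 - (t14sq (outer a)).re =
      (1 / 2) * ∑ i, ∑ p, ∑ j, ∑ q, ∑ k, ∑ t, ∑ r, ∑ h,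
        ‖a (i, j, k, r) * a (p, q, t, h) - a (p, j, k, h) * a (i, q, t, r)‖ ^ 2)) := by
  refine ⟨?_, ?_, ?_, ?_, ?_, ?_, ?_⟩
  · rw [trace1 a]
    refine (key (fun y : I4 d1 d2 d3 d4 × I4 d1 d2 d3 d4 => a y.1 * a y.2)
        (fun y : I4 d1 d2 d3 d4 × I4 d1 d2 d3 d4 => a (y.2.1, y.1.2) * a (y.1.1, y.2.2))
        (normF a ha)
        (normG a ha (fun y : I4 d1 d2 d3 d4 × I4 d1 d2 d3 d4 => ((y.2.1, y.1.2), (y.1.1, y.2.2)))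
          (by rintro ⟨⟨i, j, k, r⟩, ⟨p, q, t, h⟩⟩; rfl))).trans ?_
    congr 1
    exact (flatC (fun u v =>
      ‖a u * a v - a (v.1, u.2) * a (u.1, v.2)‖ ^ 2)).symm
  · rw [trace2 a]
    refine (key (fun y : I4 d1 d2 d3 d4 × I4 d1 d2 d3 d4 => a y.1 * a y.2)
        (fun y : I4 d1 d2 d3 d4 × I4 d1 d2 d3 d4 => a (y.1.1, y.2.2.1, y.1.2.2) * a (y.2.1, y.1.2.1, y.2.2.2))
        (normF a ha)
        (normG a ha (fun y : I4 d1 d2 d3 d4 × I4 d1 d2 d3 d4 => ((y.1.1, y.2.2.1, y.1.2.2), (y.2.1, y.1.2.1, y.2.2.2)))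
          (by rintro ⟨⟨i, j, k, r⟩, ⟨p, q, t, h⟩⟩; rfl))).trans ?_
    congr 1
    exact (flatC (fun u v =>
      ‖a u * a v - a (u.1, v.2.1, u.2.2) * a (v.1, u.2.1, v.2.2)‖ ^ 2)).symm
  · rw [trace3 a]
    refine (key (fun y : I4 d1 d2 d3 d4 × I4 d1 d2 d3 d4 => a y.1 * a y.2)
        (fun y : I4 d1 d2 d3 d4 × I4 d1 d2 d3 d4 => a (y.1.1, y.1.2.1, y.2.2.2.1, y.1.2.2.2) *
          a (y.2.1, y.2.2.1, y.1.2.2.1, y.2.2.2.2))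
        (normF a ha)
        (normG a ha (fun y : I4 d1 d2 d3 d4 × I4 d1 d2 d3 d4 => ((y.1.1, y.1.2.1, y.2.2.2.1, y.1.2.2.2),
            (y.2.1, y.2.2.1, y.1.2.2.1, y.2.2.2.2)))
          (by rintro ⟨⟨i, j, k, r⟩, ⟨p, q, t, h⟩⟩; rfl))).trans ?_
    congr 1
    exact (flatC (fun u v =>
      ‖a u * a v - a (u.1, u.2.1, v.2.2.1, u.2.2.2) *
        a (v.1, v.2.1, u.2.2.1, v.2.2.2)‖ ^ 2)).symm
  · rw [trace4 a]
    refine (key (fun y : I4 d1 d2 d3 d4 × I4 d1 d2 d3 d4 => a y.1 * a y.2)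
        (fun y : I4 d1 d2 d3 d4 × I4 d1 d2 d3 d4 => a (y.1.1, y.1.2.1, y.1.2.2.1, y.2.2.2.2) *
          a (y.2.1, y.2.2.1, y.2.2.2.1, y.1.2.2.2))
        (normF a ha)
        (normG a ha (fun y : I4 d1 d2 d3 d4 × I4 d1 d2 d3 d4 => ((y.1.1, y.1.2.1, y.1.2.2.1, y.2.2.2.2),
            (y.2.1, y.2.2.1, y.2.2.2.1, y.1.2.2.2)))
          (by rintro ⟨⟨i, j, k, r⟩, ⟨p, q, t, h⟩⟩; rfl))).trans ?_
    congr 1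
    exact (flatC (fun u v =>
      ‖a u * a v - a (u.1, u.2.1, u.2.2.1, v.2.2.2) *
        a (v.1, v.2.1, v.2.2.1, u.2.2.2)‖ ^ 2)).symm
  · rw [trace12 a]
    refine (key (fun y : I4 d1 d2 d3 d4 × I4 d1 d2 d3 d4 => a y.1 * a y.2)
        (fun y : I4 d1 d2 d3 d4 × I4 d1 d2 d3 d4 => a (y.1.1, y.1.2.1, y.2.2.2) * a (y.2.1, y.2.2.1, y.1.2.2))
        (normF a ha)
        (normG a ha (fun y : I4 d1 d2 d3 d4 × I4 d1 d2 d3 d4 => ((y.1.1, y.1.2.1, y.2.2.2), (y.2.1, y.2.2.1, y.1.2.2)))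
          (by rintro ⟨⟨i, j, k, r⟩, ⟨p, q, t, h⟩⟩; rfl))).trans ?_
    congr 1
    exact (flatC (fun u v =>
      ‖a u * a v - a (u.1, u.2.1, v.2.2) * a (v.1, v.2.1, u.2.2)‖ ^ 2)).symm
  · rw [trace13 a]
    refine (key (fun y : I4 d1 d2 d3 d4 × I4 d1 d2 d3 d4 => a y.1 * a y.2)
        (fun y : I4 d1 d2 d3 d4 × I4 d1 d2 d3 d4 => a (y.2.1, y.1.2.1, y.2.2.2.1, y.1.2.2.2) *
          a (y.1.1, y.2.2.1, y.1.2.2.1, y.2.2.2.2))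
        (normF a ha)
        (normG a ha (fun y : I4 d1 d2 d3 d4 × I4 d1 d2 d3 d4 => ((y.2.1, y.1.2.1, y.2.2.2.1, y.1.2.2.2),
            (y.1.1, y.2.2.1, y.1.2.2.1, y.2.2.2.2)))
          (by rintro ⟨⟨i, j, k, r⟩, ⟨p, q, t, h⟩⟩; rfl))).trans ?_
    congr 1
    exact (flatC (fun u v =>
      ‖a u * a v - a (v.1, u.2.1, v.2.2.1, u.2.2.2) *
        a (u.1, v.2.1, u.2.2.1, v.2.2.2)‖ ^ 2)).symm
  · rw [trace14 a]
    refine (key (fun y : I4 d1 d2 d3 d4 × I4 d1 d2 d3 d4 => a y.1 * a y.2)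
        (fun y : I4 d1 d2 d3 d4 × I4 d1 d2 d3 d4 => a (y.2.1, y.1.2.1, y.1.2.2.1, y.2.2.2.2) *
          a (y.1.1, y.2.2.1, y.2.2.2.1, y.1.2.2.2))
        (normF a ha)
        (normG a ha (fun y : I4 d1 d2 d3 d4 × I4 d1 d2 d3 d4 => ((y.2.1, y.1.2.1, y.1.2.2.1, y.2.2.2.2),
            (y.1.1, y.2.2.1, y.2.2.2.1, y.1.2.2.2)))
          (by rintro ⟨⟨i, j, k, r⟩, ⟨p, q, t, h⟩⟩; rfl))).trans ?_
    congr 1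
    exact (flatC (fun u v =>
      ‖a u * a v - a (v.1, u.2.1, u.2.2.1, v.2.2.2) *
        a (u.1, v.2.1, v.2.2.1, u.2.2.2)‖ ^ 2)).symm

end Stmt12
end
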